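/- arXiv:1304.4433 — 2 statements merged into one kernel-verified Lean document; each statement's English description precedes it below -/
import Mathlib

section
/- Let Ȳ ~ N(μ, (1/2)e^{θ_1+θ_2 μ}) be independent of S^2, where S^2/e^{θ_1+θ_2 μ} ~ χ²_1. Then E[S^2 exp(-θ_1 - θ_2 Ȳ)] = exp((1/4) θ_2^2 e^{θ_1+θ_2 μ}). In particular this expectation equals 1 (so the MACL estimating equation is unbiased) if and only if θ_2 = 0. -/
open MeasureTheory ProbabilityTheory Real
open scoped NNReal ENNReal

/-- Chi-squared with one degree of freedom: the law of `Z²`, `Z ~ N(0,1)`. -/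
noncomputable def chiSqOne : Measure ℝ :=
  (gaussianReal 0 1).map (fun x => x ^ 2)

/-- Integrals against a nondegenerate Gaussian measure as Lebesgue integrals. -/
lemma integral_gaussianReal_eq {μ : ℝ} {v : ℝ≥0} (hv : v ≠ 0) (g : ℝ → ℝ) :
    ∫ x, g x ∂(gaussianReal μ v) = ∫ x, gaussianPDFReal μ v x * g x := by
  rw [gaussianReal_of_var_ne_zero _ hv]
  have h : (gaussianPDF μ v) = fun x => ((Real.toNNReal (gaussianPDFReal μ v x) : ℝ≥0) : ℝ≥0∞) := by
    ext x
    rfl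
  rw [h, integral_withDensity_eq_integral_smul
    ((measurable_gaussianPDFReal μ v).real_toNNReal) g]
  congr 1
  ext x
  rw [NNReal.smul_def, smul_eq_mul, Real.coe_toNNReal _ (gaussianPDFReal_nonneg μ v x)]

/-- MGF of the Gaussian distribution. -/
lemma integral_exp_gaussianReal (μ : ℝ) {v : ℝ≥0} (hv : v ≠ 0) (t : ℝ) :
    ∫ x, Real.exp (t * x) ∂(gaussianReal μ v) = Real.exp (t * μ + v * t ^ 2 / 2) := by
  have hv' : (0:ℝ) < (v:ℝ) := by positivity
  rw [integral_gaussianReal_eq hv]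
  have key : ∀ x : ℝ, gaussianPDFReal μ v x * Real.exp (t * x)
      = Real.exp (t * μ + v * t ^ 2 / 2) * gaussianPDFReal (μ + v * t) v x := by
    intro x
    unfold gaussianPDFReal
    rw [mul_assoc, ← Real.exp_add, mul_left_comm, ← Real.exp_add]
    congr 2
    field_simp
    ring
  simp_rw [key]
  rw [integral_const_mul, integral_gaussianPDFReal_eq_one _ hv, mul_one]

lemma hasDerivAt_neg_gaussianPDFReal01 (x : ℝ) :
    HasDerivAt (fun y => -gaussianPDFReal 0 1 y) (x * gaussianPDFReal 0 1 x) x := by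
  unfold gaussianPDFReal
  have h1 : HasDerivAt (fun y : ℝ => -(y - 0) ^ 2 / (2 * ((1:ℝ≥0):ℝ))) (-x) x := by
    have : HasDerivAt (fun y : ℝ => y ^ 2) (2 * x) x := by
      simpa using hasDerivAt_pow 2 x
    have := ((this.neg).div_const (2 * ((1:ℝ≥0):ℝ)))
    convert this.congr_deriv ?_ using 2 with y <;> try rfl
    · simp only [Pi.neg_apply]; ring
    · push_cast; ring
  have h2 := (h1.exp.const_mul ((√(2 * π * ((1:ℝ≥0):ℝ)))⁻¹)).neg
  convert h2 using 1 <;> try rfl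
  ring

/-- Second moment of the standard Gaussian. -/
lemma integral_sq_gaussianReal01 : ∫ x, x ^ 2 ∂(gaussianReal 0 1) = 1 := by
  rw [integral_gaussianReal_eq one_ne_zero]
  have hpdf : ∀ x : ℝ, gaussianPDFReal 0 1 x = (√(2 * π))⁻¹ * Real.exp (-(1/2) * x ^ 2) := by
    intro x
    unfold gaussianPDFReal
    simp only [NNReal.coe_one, mul_one, sub_zero]
    congr 1
    ring
  -- integration by parts: u = x, w = -pdf, w' = x * pdf
  have hint2 : Integrable (fun x : ℝ => x ^ 2 * Real.exp (-(1/2) * x ^ 2)) := by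
    have := integrable_rpow_mul_exp_neg_mul_sq (by norm_num : (0:ℝ) < 1/2)
      (by norm_num : (-1:ℝ) < ((2:ℕ):ℝ))
    simpa [Real.rpow_natCast] using this
  have hintexp : Integrable (fun x : ℝ => Real.exp (-(1/2) * x ^ 2)) :=
    integrable_exp_neg_mul_sq (by norm_num)
  have hint1 : Integrable (fun x : ℝ => x * Real.exp (-(1/2) * x ^ 2)) :=
    integrable_mul_exp_neg_mul_sq (by norm_num)
  have hC : Integrable (fun x : ℝ => gaussianPDFReal 0 1 x) := integrable_gaussianPDFReal 0 1
  have hCx : Integrable (fun x : ℝ => x * gaussianPDFReal 0 1 x) := by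
    have e : (fun x : ℝ => x * gaussianPDFReal 0 1 x)
        = fun x => (√(2 * π))⁻¹ * (x * Real.exp (-(1/2) * x ^ 2)) :=
      funext fun x => by rw [hpdf]; ring
    rw [e]; exact hint1.const_mul _
  have hCx2 : Integrable (fun x : ℝ => x * (x * gaussianPDFReal 0 1 x)) := by
    have e : (fun x : ℝ => x * (x * gaussianPDFReal 0 1 x))
        = fun x => (√(2 * π))⁻¹ * (x ^ 2 * Real.exp (-(1/2) * x ^ 2)) :=
      funext fun x => by rw [hpdf]; ring
    rw [e]; exact hint2.const_mul _
  have ibp := integral_mul_deriv_eq_deriv_mul_of_integrable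
    (u := fun x : ℝ => x) (u' := fun _ : ℝ => (1:ℝ))
    (v := fun x => -gaussianPDFReal 0 1 x) (v' := fun x => x * gaussianPDFReal 0 1 x)
    (fun x _ => hasDerivAt_id x) (fun x _ => hasDerivAt_neg_gaussianPDFReal01 x)
    (show Integrable ((fun x : ℝ => x) * fun x => x * gaussianPDFReal 0 1 x) from hCx2)
    (by simp only [Pi.mul_def, one_mul]; exact hC.neg)
    (by
      have e : (fun x : ℝ => x * -gaussianPDFReal 0 1 x)
          = fun x => -(x * gaussianPDFReal 0 1 x) := funext fun x => by ring
      simp only [Pi.mul_def]; rw [e]; exact hCx.neg)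
  have : ∫ x : ℝ, x * (x * gaussianPDFReal 0 1 x) = ∫ x, gaussianPDFReal 0 1 x := by
    rw [ibp]
    simp only [one_mul]
    rw [integral_neg, neg_neg]
  calc ∫ x, gaussianPDFReal 0 1 x * x ^ 2 = ∫ x : ℝ, x * (x * gaussianPDFReal 0 1 x) := by
        congr 1; ext x; ring
    _ = ∫ x, gaussianPDFReal 0 1 x := this
    _ = 1 := integral_gaussianPDFReal_eq_one 0 one_ne_zero

/-- Let `Ȳ ~ N(μ, (1/2)e^{θ₁+θ₂μ})` be independent of `S²`, with
`S²/e^{θ₁+θ₂μ} ~ χ²₁`.  Then `E[S² exp(-θ₁-θ₂Ȳ)] = exp((1/4)θ₂² e^{θ₁+θ₂μ})`,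
and this expectation equals `1` iff `θ₂ = 0`. -/
theorem macl_ee_bias (θ₁ θ₂ μ : ℝ) :
    (∫ p : ℝ × ℝ, p.2 * Real.exp (-θ₁ - θ₂ * p.1)
        ∂((gaussianReal μ ((1 / 2 * Real.exp (θ₁ + θ₂ * μ)).toNNReal)).prod
            (chiSqOne.map (fun x => Real.exp (θ₁ + θ₂ * μ) * x)))
      = Real.exp (1 / 4 * θ₂ ^ 2 * Real.exp (θ₁ + θ₂ * μ))) ∧
    ((∫ p : ℝ × ℝ, p.2 * Real.exp (-θ₁ - θ₂ * p.1)
        ∂((gaussianReal μ ((1 / 2 * Real.exp (θ₁ + θ₂ * μ)).toNNReal)).prod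
            (chiSqOne.map (fun x => Real.exp (θ₁ + θ₂ * μ) * x)))
      = 1) ↔ θ₂ = 0) := by
  set c : ℝ := Real.exp (θ₁ + θ₂ * μ) with hc
  have hcpos : 0 < c := Real.exp_pos _
  set v : ℝ≥0 := (1 / 2 * c).toNNReal with hvdef
  have hv : v ≠ 0 := by
    simp only [hvdef, ne_eq, Real.toNNReal_eq_zero, not_le]
    positivity
  have hvr : (v : ℝ) = 1 / 2 * c := Real.coe_toNNReal _ (by positivity)
  haveI : IsProbabilityMeasure chiSqOne :=
    Measure.isProbabilityMeasure_map ((measurable_id.pow_const 2).aemeasurable)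
  haveI : IsProbabilityMeasure (chiSqOne.map (fun x => c * x)) :=
    Measure.isProbabilityMeasure_map ((measurable_id.const_mul c).aemeasurable)
  have hsplit : (∫ p : ℝ × ℝ, p.2 * Real.exp (-θ₁ - θ₂ * p.1)
        ∂((gaussianReal μ v).prod (chiSqOne.map (fun x => c * x))))
      = (∫ x, Real.exp (-θ₁ - θ₂ * x) ∂(gaussianReal μ v))
        * (∫ y, y ∂(chiSqOne.map (fun x => c * x))) := by
    rw [← integral_prod_mul (f := fun x => Real.exp (-θ₁ - θ₂ * x)) (g := fun y => y)]
    congr 1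
    ext p
    ring
  have hchi : (∫ y, y ∂(chiSqOne.map (fun x => c * x))) = c := by
    have h1 : (∫ y, y ∂(chiSqOne.map (fun x => c * x))) = ∫ x, c * x ∂chiSqOne :=
      integral_map (by fun_prop) measurable_id.aestronglyMeasurable
    have h2 : (∫ x, c * x ∂chiSqOne) = ∫ x, c * x ^ 2 ∂(gaussianReal 0 1) := by
      rw [chiSqOne]
      exact integral_map (by fun_prop) (by fun_prop)
    rw [h1, h2, integral_const_mul, integral_sq_gaussianReal01, mul_one]
  have hgauss : (∫ x, Real.exp (-θ₁ - θ₂ * x) ∂(gaussianReal μ v))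
      = Real.exp (-θ₁) * Real.exp ((-θ₂) * μ + (v:ℝ) * (-θ₂) ^ 2 / 2) := by
    rw [← integral_exp_gaussianReal μ hv (-θ₂), ← integral_const_mul]
    congr 1
    ext x
    rw [← Real.exp_add]
    congr 1
    ring
  have hmain : (∫ p : ℝ × ℝ, p.2 * Real.exp (-θ₁ - θ₂ * p.1)
        ∂((gaussianReal μ v).prod (chiSqOne.map (fun x => c * x))))
      = Real.exp (1 / 4 * θ₂ ^ 2 * c) := by
    rw [hsplit, hchi, hgauss, hvr, hc, ← Real.exp_add, mul_comm _ (Real.exp (θ₁ + θ₂ * μ)),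
      ← Real.exp_add]
    congr 1
    ring
  refine ⟨hmain, ?_⟩
  rw [hmain, Real.exp_eq_one_iff]
  constructor
  · intro h
    have h2 : θ₂ ^ 2 = 0 := by
      by_contra h3
      have : 0 < θ₂ ^ 2 := lt_of_le_of_ne (sq_nonneg θ₂) (Ne.symm h3)
      nlinarith
    exact pow_eq_zero_iff (by norm_num) |>.mp h2
  · intro h
    simp [h]
end

section
/- Let θ_2 < 0, c > 0, and g_Y(μ) = (Y-μ)^2 e^{-(θ_1+θ_2 μ)} with local maximum value M = g_Y(Y + 2/θ_2). If M ≤ c, then the set {μ ∈ ℝ : g_Y(μ) ≤ c} is an interval of the form (-∞, r_1]. If M > c, it is a union (-∞, r_1] ∪ [l_2, r_2] of two disjoint intervals with r_1 < Y + 2/θ_2 < l_2 < Y < r_2. -/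
open Real Set Filter

/-- Shape of the exact confidence set `{μ : g_Y(μ) ≤ c}` for
`g_Y(μ) = (Y-μ)² e^{-(θ₁+θ₂μ)}`, `θ₂ < 0`, `c > 0`, with `M = g_Y(Y + 2/θ₂)`
the local maximum value: if `M ≤ c` the set is a left half-line `(-∞, r₁]`;
if `M > c` it is a disjoint union `(-∞, r₁] ∪ [l₂, r₂]` with
`r₁ < Y + 2/θ₂ < l₂ < Y < r₂`. -/
theorem confidence_set_shape (Y θ₁ θ₂ c : ℝ) (hθ₂ : θ₂ < 0) (hc : 0 < c) :
    ((Y - (Y + 2 / θ₂)) ^ 2 * Real.exp (-(θ₁ + θ₂ * (Y + 2 / θ₂))) ≤ c →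
      ∃ r₁ : ℝ,
        {μ : ℝ | (Y - μ) ^ 2 * Real.exp (-(θ₁ + θ₂ * μ)) ≤ c} = Set.Iic r₁) ∧
    (c < (Y - (Y + 2 / θ₂)) ^ 2 * Real.exp (-(θ₁ + θ₂ * (Y + 2 / θ₂))) →
      ∃ r₁ l₂ r₂ : ℝ,
        r₁ < Y + 2 / θ₂ ∧ Y + 2 / θ₂ < l₂ ∧ l₂ < Y ∧ Y < r₂ ∧
        {μ : ℝ | (Y - μ) ^ 2 * Real.exp (-(θ₁ + θ₂ * μ)) ≤ c}
          = Set.Iic r₁ ∪ Set.Icc l₂ r₂) := by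
  have hθ₂' : θ₂ ≠ 0 := hθ₂.ne
  set g : ℝ → ℝ := fun μ => (Y - μ) ^ 2 * Real.exp (-(θ₁ + θ₂ * μ)) with hgdef
  set m : ℝ := Y + 2 / θ₂ with hmdef
  have hmY : m < Y := by
    have : 2 / θ₂ < 0 := div_neg_of_pos_of_neg two_pos hθ₂
    simp only [hmdef]; linarith
  have hcont : Continuous g := by
    apply Continuous.mul
    · fun_prop
    · exact Real.continuous_exp.comp (by fun_prop)
  -- derivative
  have hd : ∀ μ : ℝ, HasDerivAt g
      ((-(Y - μ) * (2 + θ₂ * (Y - μ))) * Real.exp (-(θ₁ + θ₂ * μ))) μ := by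
    intro μ
    have h1 : HasDerivAt (fun x : ℝ => (Y - x) ^ 2) (2 * (Y - μ) ^ 1 * (-1)) μ :=
      (((hasDerivAt_id μ).const_sub Y)).pow 2
    have h2 : HasDerivAt (fun x : ℝ => -(θ₁ + θ₂ * x)) (-θ₂) μ := by
      have := (((hasDerivAt_id μ).const_mul θ₂).const_add θ₁).neg
      exact this.congr_deriv (by ring)
    have h3 : HasDerivAt (fun x : ℝ => Real.exp (-(θ₁ + θ₂ * x)))
        (Real.exp (-(θ₁ + θ₂ * μ)) * (-θ₂)) μ := h2.exp
    have := h1.mul h3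
    refine this.congr_deriv ?_
    ring
  -- monotonicity on the three pieces
  have mono1 : StrictMonoOn g (Iic m) := by
    apply strictMonoOn_of_deriv_pos (convex_Iic m) hcont.continuousOn
    intro μ hμ
    rw [interior_Iic] at hμ
    rw [(hd μ).deriv]
    have key : θ₂ * Y + 2 < θ₂ * μ := by
      have h := mul_lt_mul_of_neg_left hμ hθ₂
      rw [mul_add, mul_div_cancel₀ _ hθ₂'] at h
      linarith
    have hYμ : 0 < Y - μ := by nlinarith
    have hfac : θ₂ * (Y - μ) < -2 := by nlinarith
    have h1 : 0 < -(Y - μ) * (2 + θ₂ * (Y - μ)) := by nlinarith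
    exact mul_pos h1 (Real.exp_pos _)
  have anti : StrictAntiOn g (Icc m Y) := by
    apply strictAntiOn_of_deriv_neg (convex_Icc m Y) hcont.continuousOn
    intro μ hμ
    rw [interior_Icc] at hμ
    obtain ⟨h1, h2⟩ := hμ
    rw [(hd μ).deriv]
    have key : θ₂ * μ < θ₂ * Y + 2 := by
      have h := mul_lt_mul_of_neg_left h1 hθ₂
      rw [mul_add, mul_div_cancel₀ _ hθ₂'] at h
      linarith
    have hYμ : 0 < Y - μ := by linarith
    have hpos : 0 < 2 + θ₂ * (Y - μ) := by nlinarith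
    have hneg : -(Y - μ) * (2 + θ₂ * (Y - μ)) < 0 := by nlinarith
    exact mul_neg_of_neg_of_pos hneg (Real.exp_pos _)
  have mono2 : StrictMonoOn g (Ici Y) := by
    apply strictMonoOn_of_deriv_pos (convex_Ici Y) hcont.continuousOn
    intro μ hμ
    rw [interior_Ici] at hμ
    rw [(hd μ).deriv]
    have hYμ : Y - μ < 0 := by simpa using sub_neg.mpr (show Y < μ from hμ)
    have hpos : 0 < θ₂ * (Y - μ) := mul_pos_of_neg_of_neg hθ₂ hYμ
    have h1 : 0 < -(Y - μ) * (2 + θ₂ * (Y - μ)) := by nlinarith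
    exact mul_pos h1 (Real.exp_pos _)
  -- values
  have hgY : g Y = 0 := by simp [hgdef]
  have hM0 : 0 < g m := by
    have hne : Y - m ≠ 0 := by
      have h2 : (2 : ℝ) / θ₂ ≠ 0 := div_ne_zero two_ne_zero hθ₂'
      simp only [hmdef]; intro h; apply h2; linarith
    simp only [hgdef]
    positivity
  -- limit at -∞
  have h0 : Tendsto g atBot (nhds 0) := by
    have h1 : Tendsto (fun t : ℝ => t ^ 2 * Real.exp (-t)) atTop (nhds 0) :=
      tendsto_pow_mul_exp_neg_atTop_nhds_zero 2
    have hsub : Tendsto (fun μ : ℝ => μ - Y) atBot atBot := by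
      simpa [sub_eq_add_neg] using tendsto_atBot_add_const_right atBot (-Y) (tendsto_id (α := ℝ))
    have h2 : Tendsto (fun μ : ℝ => θ₂ * (μ - Y)) atBot atTop :=
      (tendsto_const_mul_atTop_of_neg hθ₂).mpr hsub
    have h3 := h1.comp h2
    have h4 := h3.const_mul (Real.exp (-(θ₁ + θ₂ * Y)) / θ₂ ^ 2)
    rw [mul_zero] at h4
    refine h4.congr fun μ => ?_
    show Real.exp (-(θ₁ + θ₂ * Y)) / θ₂ ^ 2 *
        ((θ₂ * (μ - Y)) ^ 2 * Real.exp (-(θ₂ * (μ - Y)))) = g μ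
    have he : Real.exp (-(θ₁ + θ₂ * Y)) * Real.exp (-(θ₂ * (μ - Y)))
        = Real.exp (-(θ₁ + θ₂ * μ)) := by
      rw [← Real.exp_add]; congr 1; ring
    simp only [hgdef]
    rw [← he]
    field_simp
    ring
  -- tendsto at +∞
  have hTop : Tendsto g atTop atTop := by
    have h1 : Tendsto (fun μ : ℝ => θ₂ * μ) atTop atBot :=
      (tendsto_const_mul_atBot_of_neg hθ₂).mpr tendsto_id
    have h2 : Tendsto (fun μ : ℝ => θ₁ + θ₂ * μ) atTop atBot :=
      tendsto_atBot_add_const_left atTop θ₁ h1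
    have hlin : Tendsto (fun μ : ℝ => -(θ₁ + θ₂ * μ)) atTop atTop :=
      tendsto_neg_atTop_iff.mpr h2
    have hexp : Tendsto (fun μ : ℝ => Real.exp (-(θ₁ + θ₂ * μ))) atTop atTop :=
      Real.tendsto_exp_atTop.comp hlin
    apply tendsto_atTop_mono' atTop ?_ hexp
    filter_upwards [eventually_ge_atTop (Y + 1)] with μ hμ
    show Real.exp (-(θ₁ + θ₂ * μ)) ≤ g μ
    have hsq : 1 ≤ (Y - μ) ^ 2 := by nlinarith
    simp only [hgdef]
    nlinarith [Real.exp_pos (-(θ₁ + θ₂ * μ))]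
  constructor
  · -- case M ≤ c
    intro hMc
    have hMc' : g m ≤ c := hMc
    obtain ⟨b, hbc, hYb⟩ : ∃ b, c < g b ∧ Y ≤ b :=
      ((hTop.eventually_gt_atTop c).and (eventually_ge_atTop Y)).exists
    obtain ⟨r₁, hr₁mem, hgr₁⟩ : ∃ r₁ ∈ Icc Y b, g r₁ = c :=
      intermediate_value_Icc hYb hcont.continuousOn ⟨by linarith, hbc.le⟩
    refine ⟨r₁, ?_⟩
    ext μ
    simp only [mem_setOf_eq, mem_Iic]
    show g μ ≤ c ↔ μ ≤ r₁
    constructor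
    · intro hμ
      by_contra hcon
      push_neg at hcon
      have h1 : g r₁ < g μ := mono2 hr₁mem.1 (le_trans hr₁mem.1 hcon.le) hcon
      rw [hgr₁] at h1
      exact absurd hμ (not_le.mpr h1)
    · intro hμ
      rcases le_or_gt μ Y with h | h
      · rcases le_or_gt μ m with h2 | h2
        · have := mono1.monotoneOn (mem_Iic.mpr h2) (mem_Iic.mpr le_rfl) h2
          linarith
        · have := anti.antitoneOn (left_mem_Icc.mpr hmY.le) ⟨h2.le, h⟩ h2.le
          linarith
      · have := mono2.monotoneOn (mem_Ici.mpr h.le) (mem_Ici.mpr (h.le.trans hμ)) hμ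
        rw [hgr₁] at this
        exact this
  · -- case c < M
    intro hcM
    have hcM' : c < g m := hcM
    obtain ⟨a, hac, ham⟩ : ∃ a, g a < c ∧ a < m :=
      ((h0.eventually (gt_mem_nhds hc)).and (eventually_lt_atBot m)).exists
    obtain ⟨r₁, hr₁mem, hgr₁⟩ : ∃ r₁ ∈ Icc a m, g r₁ = c :=
      intermediate_value_Icc ham.le hcont.continuousOn ⟨hac.le, hcM'.le⟩
    have hr₁m : r₁ < m := lt_of_le_of_ne hr₁mem.2 (by intro h; rw [h] at hgr₁; linarith)
    obtain ⟨l₂, hl₂mem, hgl₂⟩ : ∃ l₂ ∈ Icc m Y, g l₂ = c :=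
      intermediate_value_Icc' hmY.le hcont.continuousOn ⟨by linarith, hcM'.le⟩
    have hml₂ : m < l₂ := lt_of_le_of_ne hl₂mem.1 (by intro h; rw [← h] at hgl₂; linarith)
    have hl₂Y : l₂ < Y := lt_of_le_of_ne hl₂mem.2 (by intro h; rw [h, hgY] at hgl₂; linarith)
    obtain ⟨b, hbc, hYb⟩ : ∃ b, c < g b ∧ Y ≤ b :=
      ((hTop.eventually_gt_atTop c).and (eventually_ge_atTop Y)).exists
    obtain ⟨r₂, hr₂mem, hgr₂⟩ : ∃ r₂ ∈ Icc Y b, g r₂ = c :=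
      intermediate_value_Icc hYb hcont.continuousOn ⟨by linarith, hbc.le⟩
    have hYr₂ : Y < r₂ := lt_of_le_of_ne hr₂mem.1 (by intro h; rw [← h, hgY] at hgr₂; linarith)
    refine ⟨r₁, l₂, r₂, hr₁m, hml₂, hl₂Y, hYr₂, ?_⟩
    ext μ
    simp only [mem_setOf_eq, mem_union, mem_Iic, mem_Icc]
    show g μ ≤ c ↔ μ ≤ r₁ ∨ l₂ ≤ μ ∧ μ ≤ r₂
    constructor
    · intro hμ
      rcases le_or_gt μ m with h | h
      · left
        by_contra hcon
        push_neg at hcon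
        have h1 : g r₁ < g μ := mono1 (mem_Iic.mpr (hr₁m.le)) (mem_Iic.mpr h) hcon
        rw [hgr₁] at h1
        exact absurd hμ (not_le.mpr h1)
      · rcases le_or_gt μ Y with h2 | h2
        · right
          refine ⟨?_, le_trans h2 hYr₂.le⟩
          by_contra hcon
          push_neg at hcon
          have h1 : g l₂ < g μ := anti ⟨h.le, h2⟩ hl₂mem hcon
          rw [hgl₂] at h1
          exact absurd hμ (not_le.mpr h1)
        · right
          refine ⟨le_trans hl₂Y.le h2.le, ?_⟩
          by_contra hcon
          push_neg at hcon
          have h1 : g r₂ < g μ := mono2 (mem_Ici.mpr hYr₂.le) (mem_Ici.mpr h2.le) hcon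
          rw [hgr₂] at h1
          exact absurd hμ (not_le.mpr h1)
    · intro hμ
      rcases hμ with h | ⟨h1, h2⟩
      · have := mono1.monotoneOn (mem_Iic.mpr (h.trans hr₁m.le)) (mem_Iic.mpr hr₁m.le) h
        rw [hgr₁] at this
        exact this
      · rcases le_or_gt μ Y with h3 | h3
        · have := anti.antitoneOn hl₂mem ⟨le_trans hml₂.le h1, h3⟩ h1
          rw [hgl₂] at this
          exact this
        · have := mono2.monotoneOn (mem_Ici.mpr h3.le) (mem_Ici.mpr (h3.le.trans h2)) h2
          rw [hgr₂] at this
          exact this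
end
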